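/- Suppose H ⊆ 2^{[n]} is a 2-wise ⌈t + √t/2 − 5/4⌉-intersecting family, 0 < p ≤ p_0(t) = 2/(√(4t+9)−1), and t ≥ 241. Then μ_p(H) < (1/2) p^t. -/

import Mathlib

open Finset

/-- p-biased measure of a family on ground set of size `n` (= `[n]`). -/
def mu (p : ℝ) (n : ℕ) (G : Finset (Finset ℕ)) : ℝ :=
  ∑ A ∈ G, p ^ A.card * (1 - p) ^ (n - A.card)

/-- p-biased measure of a family on an arbitrary finite ground set `X`. -/
def muOn (p : ℝ) (X : Finset ℕ) (G : Finset (Finset ℕ)) : ℝ :=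
  ∑ A ∈ G, p ^ A.card * (1 - p) ^ (X.card - A.card)

/-- `F_0^t = {F ⊆ [n] : [t] ⊆ F}`. -/
def F0 (n t : ℕ) : Finset (Finset ℕ) :=
  (Finset.Icc 1 n).powerset.filter (fun F => Finset.Icc 1 t ⊆ F)

/-- `F_1^t = {F ⊆ [n] : |F ∩ [t+3]| ≥ t+2}`. -/
def F1 (n t : ℕ) : Finset (Finset ℕ) :=
  (Finset.Icc 1 n).powerset.filter (fun F => t + 2 ≤ (F ∩ Finset.Icc 1 (t + 3)).card)

/-- `F_2^t = {F ⊆ [n] : |F ∩ [t+6]| ≥ t+4}`. -/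
def F2 (n t : ℕ) : Finset (Finset ℕ) :=
  (Finset.Icc 1 n).powerset.filter (fun F => t + 4 ≤ (F ∩ Finset.Icc 1 (t + 6)).card)

/-- `p_0(t) = 2/(√(4t+9) − 1)`. -/
noncomputable def p0 (t : ℕ) : ℝ := 2 / (Real.sqrt (4 * t + 9) - 1)

/-- The family is `r`-wise `t`-intersecting: any `r` members (with repetition)
intersect in at least `t` elements. -/
def RWise (r t : ℕ) (G : Finset (Finset ℕ)) : Prop :=
  ∀ f : Fin r → Finset ℕ, (∀ k, f k ∈ G) → t ≤ (⋂ k, (f k : Set ℕ)).ncard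

/-- The shift `s_{i,j}` of a single set `A`, relative to the family `G`. -/
def shiftSet (i j : ℕ) (G : Finset (Finset ℕ)) (A : Finset ℕ) : Finset ℕ :=
  if A ∩ {i, j} = {j} ∧ (A.erase j ∪ {i}) ∉ G then A.erase j ∪ {i} else A

/-- The shifting operation `σ_{i,j}` applied to a family. -/
def shift (i j : ℕ) (G : Finset (Finset ℕ)) : Finset (Finset ℕ) :=
  G.image (shiftSet i j G)

/-- `G` and `H` are isomorphic as families on ground set `[n]`:
`H` is the image of `G` under a permutation preserving `[n]`. -/
def Iso (n : ℕ) (G H : Finset (Finset ℕ)) : Prop :=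
  ∃ τ : Equiv.Perm ℕ, (∀ x, x ∈ Finset.Icc 1 n ↔ τ x ∈ Finset.Icc 1 n) ∧
    H = G.image (fun A => A.image τ)

/-- `G` is `(3,t)`-maximal on `[n]`. -/
def Max3 (n t : ℕ) (G : Finset (Finset ℕ)) : Prop :=
  (∀ A ∈ G, A ⊆ Finset.Icc 1 n) ∧ RWise 3 t G ∧
    ∀ F : Finset ℕ, F ⊆ Finset.Icc 1 n → F ∉ G → ¬ RWise 3 t (insert F G)

/-- `G` is shifted on `[n]`. -/
def Shifted (n : ℕ) (G : Finset (Finset ℕ)) : Prop :=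
  ∀ i j : ℕ, 1 ≤ i → i < j → j ≤ n → shift i j G = G

/-- One shifting step. -/
def ShiftStep (n : ℕ) (G H : Finset (Finset ℕ)) : Prop :=
  ∃ i j : ℕ, 1 ≤ i ∧ i ≤ n ∧ 1 ≤ j ∧ j ≤ n ∧ H = shift i j G


lemma muOn_nonneg {p : ℝ} (hp : 0 ≤ p) (hp1 : p ≤ 1) (X : Finset ℕ) (G : Finset (Finset ℕ)) :
    0 ≤ muOn p X G := by
  apply Finset.sum_nonneg
  intro A _
  have : (0:ℝ) ≤ 1 - p := by linarith
  positivity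

lemma muOn_mono {p : ℝ} (hp : 0 ≤ p) (hp1 : p ≤ 1) (X : Finset ℕ) {G H : Finset (Finset ℕ)}
    (hGH : G ⊆ H) : muOn p X G ≤ muOn p X H := by
  apply Finset.sum_le_sum_of_subset_of_nonneg hGH
  intro A _ _
  have : (0:ℝ) ≤ 1 - p := by linarith
  positivity

lemma total_measure {p : ℝ} (hp : 0 ≤ p) (hp1 : p ≤ 1) (X : Finset ℕ)
    (G : Finset (Finset ℕ)) (hG : ∀ A ∈ G, A ⊆ X) : muOn p X G ≤ 1 := by
  have h1 : muOn p X G ≤ muOn p X X.powerset := by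
    apply muOn_mono hp hp1
    intro A hA
    exact Finset.mem_powerset.2 (hG A hA)
  have h2 : muOn p X X.powerset = 1 := by
    have := Finset.prod_add (fun _ : ℕ => p) (fun _ : ℕ => 1 - p) X
    simp only [Finset.prod_const, add_sub_cancel] at this
    rw [one_pow] at this
    have h3 : ∑ A ∈ X.powerset, p ^ A.card * (1 - p) ^ (X.card - A.card)
        = ∑ A ∈ X.powerset, p ^ A.card * (1 - p) ^ (X \ A).card := by
      apply Finset.sum_congr rfl
      intro A hA
      rw [Finset.mem_powerset] at hA
      rw [Finset.card_sdiff_of_subset hA]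
    rw [muOn, h3]
    exact this.symm
  linarith [h1, h2.le, h2.ge]


lemma walk_bound {p : ℝ} (hp : 0 < p) (hp1 : p < 1) :
    ∀ (N a s : ℕ) (G : Finset (Finset ℕ)),
      (∀ A ∈ G, A ⊆ Icc (a+1) (a+N)) →
      (∀ F ∈ G, ∃ m, m + s ≤ 2 * (F ∩ Icc (a+1) (a+m)).card) →
      muOn p (Icc (a+1) (a+N)) G ≤ (p/(1-p))^s := by
  intro N
  induction N with
  | zero =>
    intro a s G hsub hreach
    match s with
    | 0 =>
      simpa using total_measure hp.le hp1.le _ G hsub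
    | s+1 =>
      have hGempty : G = ∅ := by
        rw [Finset.eq_empty_iff_forall_notMem]
        intro F hF
        obtain ⟨m, hm⟩ := hreach F hF
        have hFsub : F ⊆ Icc (a+1) (a+0) := hsub F hF
        have : F ∩ Icc (a+1) (a+m) = ∅ := by
          rw [Finset.eq_empty_iff_forall_notMem]
          intro x hx
          have hx1 := hFsub (Finset.mem_inter.1 hx).1
          simp [Finset.mem_Icc] at hx1
        rw [this] at hm
        simp at hm
      rw [hGempty]
      have : (0:ℝ) < p/(1-p) := by
        apply div_pos hp; linarith
      simp [muOn]
      positivity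
  | succ N IH =>
    intro a s G hsub hreach
    match s with
    | 0 =>
      simpa using total_measure hp.le hp1.le _ G hsub
    | s+1 =>
      set q : ℝ := 1 - p with hq
      have hq0 : 0 < q := by rw [hq]; linarith
      set X := Icc (a+1) (a+(N+1)) with hX
      set X' := Icc (a+1+1) (a+1+N) with hX'
      have hXcard : X.card = N+1 := by rw [hX, Nat.card_Icc]; omega
      have hX'card : X'.card = N := by rw [hX', Nat.card_Icc]; omega
      set G₁ := G.filter (fun A => a+1 ∈ A) with hG₁
      set G₀ := G.filter (fun A => a+1 ∉ A) with hG₀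
      have hsplit : muOn p X G = muOn p X G₁ + muOn p X G₀ :=
        (Finset.sum_filter_add_sum_filter_not G _ _).symm
      -- G₀ part
      have hG₀sub : ∀ A ∈ G₀, A ⊆ X' := by
        intro A hA
        rw [hG₀, Finset.mem_filter] at hA
        intro x hx
        have := hsub A hA.1 hx
        rw [hX, Finset.mem_Icc] at this
        rw [hX', Finset.mem_Icc]
        have : x ≠ a + 1 := fun h => hA.2 (h ▸ hx)
        omega
      have hG₀mu : muOn p X G₀ = q * muOn p X' G₀ := by
        rw [muOn, muOn, Finset.mul_sum]
        apply Finset.sum_congr rfl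
        intro A hA
        have hcard : A.card ≤ N := by
          have := Finset.card_le_card (hG₀sub A hA)
          omega
        rw [hXcard, hX'card]
        have he : N + 1 - A.card = (N - A.card) + 1 := by omega
        rw [he, pow_succ]
        ring
      have hG₀reach : ∀ F ∈ G₀, ∃ m, m + (s+2) ≤ 2 * (F ∩ Icc (a+1+1) (a+1+m)).card := by
        intro F hF
        rw [hG₀, Finset.mem_filter] at hF
        obtain ⟨m, hm⟩ := hreach F hF.1
        match m with
        | 0 =>
          exfalso
          have : F ∩ Icc (a+1) (a+0) = ∅ := by
            rw [Finset.eq_empty_iff_forall_notMem]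
            intro x hx
            have := (Finset.mem_inter.1 hx).2
            simp [Finset.mem_Icc] at this
          rw [this] at hm; simp at hm
        | m+1 =>
          refine ⟨m, ?_⟩
          have hsets : F ∩ Icc (a+1) (a+(m+1)) = F ∩ Icc (a+1+1) (a+1+m) := by
            ext x
            simp only [Finset.mem_inter, Finset.mem_Icc]
            constructor
            · rintro ⟨hxF, hx1, hx2⟩
              have : x ≠ a + 1 := fun h => hF.2 (h ▸ hxF)
              exact ⟨hxF, by omega, by omega⟩
            · rintro ⟨hxF, hx1, hx2⟩
              exact ⟨hxF, by omega, by omega⟩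
          rw [hsets] at hm
          omega
      have hG₀bound : muOn p X' G₀ ≤ (p/q)^(s+2) := IH (a+1) (s+2) G₀ hG₀sub hG₀reach
      -- G₁ part
      set G₁' := G₁.image (fun A => A.erase (a+1)) with hG₁'
      have hmem1 : ∀ A ∈ G₁, a+1 ∈ A := by
        intro A hA; exact (Finset.mem_filter.1 hA).2
      have hinj : ∀ A ∈ G₁, ∀ B ∈ G₁, A.erase (a+1) = B.erase (a+1) → A = B := by
        intro A hA B hB h
        have := Finset.insert_erase (hmem1 A hA)
        rw [← this, h, Finset.insert_erase (hmem1 B hB)]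
      have hG₁mu : muOn p X G₁ = p * muOn p X' G₁' := by
        rw [muOn, muOn, hG₁', Finset.sum_image hinj, Finset.mul_sum]
        apply Finset.sum_congr rfl
        intro A hA
        have hcard : (A.erase (a+1)).card + 1 = A.card :=
          Finset.card_erase_add_one (hmem1 A hA)
        have hcard2 : A.card ≤ N + 1 := by
          have := Finset.card_le_card (hsub A (Finset.mem_filter.1 hA).1)
          rw [Nat.card_Icc] at this
          omega
        rw [hXcard, hX'card, ← hcard]
        have he : N + 1 - ((A.erase (a+1)).card + 1) = N - (A.erase (a+1)).card := by omega
        rw [he, pow_succ]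
        ring
      have hG₁'sub : ∀ A' ∈ G₁', A' ⊆ X' := by
        intro A' hA'
        rw [hG₁', Finset.mem_image] at hA'
        obtain ⟨A, hA, rfl⟩ := hA'
        intro x hx
        have hxA : x ∈ A := Finset.mem_of_mem_erase hx
        have hxne : x ≠ a+1 := Finset.ne_of_mem_erase hx
        have := hsub A (Finset.mem_filter.1 hA).1 hxA
        rw [hX, Finset.mem_Icc] at this
        rw [hX', Finset.mem_Icc]
        omega
      have hG₁'reach : ∀ F' ∈ G₁', ∃ m, m + s ≤ 2 * (F' ∩ Icc (a+1+1) (a+1+m)).card := by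
        intro F' hF'
        rw [hG₁', Finset.mem_image] at hF'
        obtain ⟨F, hF, rfl⟩ := hF'
        obtain ⟨m, hm⟩ := hreach F (Finset.mem_filter.1 hF).1
        match m with
        | 0 =>
          exfalso
          have : F ∩ Icc (a+1) (a+0) = ∅ := by
            rw [Finset.eq_empty_iff_forall_notMem]
            intro x hx
            have := (Finset.mem_inter.1 hx).2
            simp [Finset.mem_Icc] at this
          rw [this] at hm; simp at hm
        | m+1 =>
          refine ⟨m, ?_⟩
          have hkey : F.erase (a+1) ∩ Icc (a+1+1) (a+1+m)
              = (F ∩ Icc (a+1) (a+(m+1))).erase (a+1) := by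
            ext x
            simp only [Finset.mem_inter, Finset.mem_erase, Finset.mem_Icc]
            constructor
            · rintro ⟨⟨hne, hxF⟩, hx1, hx2⟩
              exact ⟨hne, hxF, by omega, by omega⟩
            · rintro ⟨hne, hxF, hx1, hx2⟩
              refine ⟨⟨hne, hxF⟩, by omega, by omega⟩
          have hmemI : a+1 ∈ F ∩ Icc (a+1) (a+(m+1)) := by
            rw [Finset.mem_inter, Finset.mem_Icc]
            exact ⟨(Finset.mem_filter.1 hF).2, by omega, by omega⟩
          have hc := Finset.card_erase_add_one hmemI
          rw [hkey]
          omega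
      have hG₁bound : muOn p X' G₁' ≤ (p/q)^s := IH (a+1) s G₁' hG₁'sub hG₁'reach
      -- combine
      have hnn0 : 0 ≤ muOn p X' G₀ := by
        apply Finset.sum_nonneg; intro A _
        have : (0:ℝ) ≤ 1 - p := by linarith
        positivity
      have hnn1 : 0 ≤ muOn p X' G₁' := by
        apply Finset.sum_nonneg; intro A _
        have : (0:ℝ) ≤ 1 - p := by linarith
        positivity
      have halg : p * (p/q)^s + q * (p/q)^(s+2) = (p/q)^(s+1) := by
        have hinv : q * q⁻¹ = 1 := mul_inv_cancel₀ hq0.ne'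
        have hpq1 : p + q = 1 := by rw [hq]; ring
        have key : p + q * (p/q)^2 = p/q := by
          rw [div_eq_mul_inv]
          linear_combination (p^2*q⁻¹ - p) * hinv + p*q⁻¹ * hpq1
        rw [pow_succ, pow_add]
        linear_combination (p/q)^s * key
      calc muOn p X G = p * muOn p X' G₁' + q * muOn p X' G₀ := by
            rw [hsplit, hG₀mu, hG₁mu]
          _ ≤ p * (p/q)^s + q * (p/q)^(s+2) := by
            apply add_le_add
            · exact mul_le_mul_of_nonneg_left hG₁bound hp.le
            · exact mul_le_mul_of_nonneg_left hG₀bound hq0.le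
          _ = (p/q)^(s+1) := halg


lemma closure_walk (n s : ℕ) (hs : 1 ≤ s) (G : Finset (Finset ℕ))
    (hsub : ∀ A ∈ G, A ⊆ Icc 1 n)
    (hpair : ∀ A ∈ G, ∀ B ∈ G, s ≤ (A ∩ B).card)
    (hclo : ∀ F ∈ G, ∀ i j : ℕ, 1 ≤ i → i < j → j ≤ n → j ∈ F → i ∉ F →
      (F.erase j ∪ {i}) ∈ G)
    (F : Finset ℕ) (hF : F ∈ G) : ∃ m, m + s ≤ 2 * (F ∩ Icc 1 m).card := by
  by_contra hcon
  push_neg at hcon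
  have main : ∀ (M : ℕ) (F' : Finset ℕ), F' ∈ G → (∑ x ∈ F', x) ≤ M →
      (∀ m, ((F ∩ F') ∩ Icc 1 m).card + ((F ∪ F') ∩ Icc 1 m).card + 1 ≤ m + s) → False := by
    intro M
    induction M using Nat.strong_induction_on with
    | _ M IH =>
      intro F' hF' hsum hJ
      have hcF' : s ≤ (F ∩ F').card := hpair F hF F' hF'
      have hne : (F ∩ F').Nonempty := by
        rw [← Finset.card_pos]; omega
      set j := (F ∩ F').max' hne with hjdef
      have hjmem : j ∈ F ∩ F' := Finset.max'_mem _ hne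
      have hjF : j ∈ F := (Finset.mem_inter.1 hjmem).1
      have hjF' : j ∈ F' := (Finset.mem_inter.1 hjmem).2
      have hjIcc : j ∈ Icc 1 n := hsub F' hF' hjF'
      have hj1 : 1 ≤ j := (Finset.mem_Icc.1 hjIcc).1
      have hjn : j ≤ n := (Finset.mem_Icc.1 hjIcc).2
      have hsubj : F ∩ F' ⊆ Icc 1 j := by
        intro x hx
        rw [Finset.mem_Icc]
        have hx1 := hsub F hF (Finset.mem_inter.1 hx).1
        exact ⟨(Finset.mem_Icc.1 hx1).1, Finset.le_max' _ x hx⟩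
      have hAj : (F ∩ F') ∩ Icc 1 j = F ∩ F' := Finset.inter_eq_left.2 hsubj
      have hJj := hJ j
      rw [hAj] at hJj
      have hBj : ((F ∪ F') ∩ Icc 1 j).card < j := by omega
      -- find i
      have hD : (Icc 1 j \ (F ∪ F')).Nonempty := by
        rw [Finset.sdiff_nonempty]
        intro hcontra
        have : (F ∪ F') ∩ Icc 1 j = Icc 1 j := by
          rw [Finset.inter_eq_right]
          exact hcontra
        rw [this, Nat.card_Icc] at hBj
        omega
      set i := (Icc 1 j \ (F ∪ F')).max' hD with hidef
      have himem := Finset.max'_mem _ hD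
      rw [Finset.mem_sdiff, Finset.mem_Icc] at himem
      obtain ⟨⟨hi1, hij'⟩, hiFF⟩ := himem
      have hiF : i ∉ F := fun h => hiFF (Finset.mem_union_left _ h)
      have hiF' : i ∉ F' := fun h => hiFF (Finset.mem_union_right _ h)
      have hijne : i ≠ j := by
        intro h
        apply hiFF
        rw [hidef] at h
        rw [h]
        exact Finset.mem_union_left _ hjF
      have hij : i < j := lt_of_le_of_ne hij' hijne
      have hmax : ∀ x, i < x → x ≤ j → x ∈ F ∪ F' := by
        intro x h1 h2
        by_contra hx
        have : x ∈ Icc 1 j \ (F ∪ F') := by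
          rw [Finset.mem_sdiff, Finset.mem_Icc]
          exact ⟨⟨by omega, h2⟩, hx⟩
        have := Finset.le_max' _ x this
        omega
      set F'' := F'.erase j ∪ {i} with hF''def
      have hF''G : F'' ∈ G := hclo F' hF' i j hi1 hij hjn hjF' hiF'
      have hF''eq : F'' = insert i (F'.erase j) := by
        rw [hF''def, Finset.union_comm, ← Finset.insert_eq]
      have hsum'' : (∑ x ∈ F'', x) < ∑ x ∈ F', x := by
        rw [hF''eq, Finset.sum_insert (fun h => hiF' (Finset.mem_of_mem_erase h))]
        have := Finset.sum_erase_add F' id hjF'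
        simp only [id] at this
        omega
      -- set identities
      have hIdI : F ∩ F'' = (F ∩ F').erase j := by
        ext x
        rw [hF''eq]
        simp only [Finset.mem_inter, Finset.mem_insert, Finset.mem_erase]
        constructor
        · rintro ⟨hxF, hx | hx⟩
          · exact absurd (hx ▸ hxF) hiF
          · exact ⟨hx.1, hxF, hx.2⟩
        · rintro ⟨hne', hxF, hxF'⟩
          exact ⟨hxF, Or.inr ⟨hne', hxF'⟩⟩
      have hIdU : F ∪ F'' = insert i (F ∪ F') := by
        ext x
        rw [hF''eq]
        simp only [Finset.mem_union, Finset.mem_insert, Finset.mem_erase]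
        constructor
        · rintro (hx | hx | hx)
          · exact Or.inr (Or.inl hx)
          · exact Or.inl hx
          · exact Or.inr (Or.inr hx.2)
        · rintro (hx | hx | hx)
          · exact Or.inr (Or.inl hx)
          · exact Or.inl hx
          · by_cases hxj : x = j
            · exact Or.inl (hxj ▸ hjF)
            · exact Or.inr (Or.inr ⟨hxj, hx⟩)
      have hJ'' : ∀ m, ((F ∩ F'') ∩ Icc 1 m).card + ((F ∪ F'') ∩ Icc 1 m).card + 1 ≤ m + s := by
        intro m
        rw [hIdI, hIdU]
        have heI : (F ∩ F').erase j ∩ Icc 1 m = ((F ∩ F') ∩ Icc 1 m).erase j := by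
          ext x
          simp only [Finset.mem_inter, Finset.mem_erase]
          tauto
        rw [heI]
        rcases lt_or_ge m i with hmi | him
        · -- m < i : nothing changes
          have h1 : j ∉ (F ∩ F') ∩ Icc 1 m := by
            rw [Finset.mem_inter, Finset.mem_Icc]
            rintro ⟨-, -, h⟩; omega
          rw [Finset.erase_eq_of_notMem h1]
          have h2 : insert i (F ∪ F') ∩ Icc 1 m = (F ∪ F') ∩ Icc 1 m := by
            ext x
            simp only [Finset.mem_inter, Finset.mem_insert, Finset.mem_Icc]
            constructor
            · rintro ⟨hx | hx, h1', h2'⟩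
              · omega
              · exact ⟨hx, h1', h2'⟩
            · rintro ⟨hx, h1', h2'⟩
              exact ⟨Or.inr hx, h1', h2'⟩
          rw [h2]
          exact hJ m
        · have hiI : insert i (F ∪ F') ∩ Icc 1 m = insert i ((F ∪ F') ∩ Icc 1 m) := by
            ext x
            simp only [Finset.mem_inter, Finset.mem_insert, Finset.mem_Icc]
            constructor
            · rintro ⟨hx | hx, h1', h2'⟩
              · exact Or.inl hx
              · exact Or.inr ⟨hx, h1', h2'⟩
            · rintro (hx | ⟨hx, h1', h2'⟩)
              · exact ⟨Or.inl hx, by omega, by omega⟩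
              · exact ⟨Or.inr hx, h1', h2'⟩
          have hiNot : i ∉ (F ∪ F') ∩ Icc 1 m := fun h => hiFF (Finset.mem_inter.1 h).1
          rw [hiI, Finset.card_insert_of_notMem hiNot]
          rcases lt_or_ge m j with hmj | hjm
          · -- i ≤ m < j
            have h1 : j ∉ (F ∩ F') ∩ Icc 1 m := by
              rw [Finset.mem_inter, Finset.mem_Icc]
              rintro ⟨-, -, h⟩; omega
            rw [Finset.erase_eq_of_notMem h1]
            -- A m < A j
            have hAmj : ((F ∩ F') ∩ Icc 1 m).card < ((F ∩ F') ∩ Icc 1 j).card := by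
              apply Finset.card_lt_card
              constructor
              · intro x hx
                rw [Finset.mem_inter, Finset.mem_Icc] at hx ⊢
                exact ⟨hx.1, hx.2.1, by omega⟩
              · intro hsub'
                have : j ∈ (F ∩ F') ∩ Icc 1 m := hsub' (by
                  rw [Finset.mem_inter, Finset.mem_Icc]; exact ⟨hjmem, by omega, le_refl j⟩)
                exact h1 this
            -- B m + (j - m) ≤ B j
            have hBmj : ((F ∪ F') ∩ Icc 1 m).card + (j - m) ≤ ((F ∪ F') ∩ Icc 1 j).card := by
              have hdisj : Disjoint ((F ∪ F') ∩ Icc 1 m) (Icc (m+1) j) := by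
                rw [Finset.disjoint_left]
                intro x hx hx2
                rw [Finset.mem_inter, Finset.mem_Icc] at hx
                rw [Finset.mem_Icc] at hx2
                omega
              have hsubU : ((F ∪ F') ∩ Icc 1 m) ∪ Icc (m+1) j ⊆ (F ∪ F') ∩ Icc 1 j := by
                intro x hx
                rw [Finset.mem_union] at hx
                rcases hx with hx | hx
                · rw [Finset.mem_inter, Finset.mem_Icc] at hx ⊢
                  exact ⟨hx.1, hx.2.1, by omega⟩
                · rw [Finset.mem_Icc] at hx
                  rw [Finset.mem_inter, Finset.mem_Icc]
                  exact ⟨hmax x (by omega) hx.2, by omega, hx.2⟩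
              have := Finset.card_le_card hsubU
              rw [Finset.card_union_of_disjoint hdisj, Nat.card_Icc] at this
              omega
            have := hJ j
            rw [hAj] at this
            have hAmc : ((F ∩ F') ∩ Icc 1 m).card < (F ∩ F').card :=
              lt_of_lt_of_le hAmj (le_of_eq (by rw [hAj]))
            omega
          · -- j ≤ m
            have hjin : j ∈ (F ∩ F') ∩ Icc 1 m := by
              rw [Finset.mem_inter, Finset.mem_Icc]
              exact ⟨hjmem, by omega, hjm⟩
            have hce := Finset.card_erase_add_one hjin
            have := hJ m
            omega
      exact IH (∑ x ∈ F'', x) (by omega) F'' hF''G le_rfl hJ''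
  apply main (∑ x ∈ F, x) F hF le_rfl
  intro m
  have h1 := hcon m
  rw [Finset.inter_self, Finset.union_self]
  omega


section ShiftLemmas

variable {i j : ℕ} {G : Finset (Finset ℕ)} {A B : Finset ℕ}

lemma cond_mem (hij : i ≠ j) (h : A ∩ {i, j} = {j}) : j ∈ A ∧ i ∉ A := by
  constructor
  · have : j ∈ A ∩ ({i, j} : Finset ℕ) := by
      rw [h]; exact Finset.mem_singleton_self j
    exact (Finset.mem_inter.1 this).1
  · intro hi
    have : i ∈ A ∩ ({i, j} : Finset ℕ) := Finset.mem_inter.2 ⟨hi, by simp⟩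
    rw [h, Finset.mem_singleton] at this
    exact hij this

lemma cond_of_mem (hij : i ≠ j) (hj : j ∈ A) (hi : i ∉ A) : A ∩ {i, j} = {j} := by
  ext x
  simp only [Finset.mem_inter, Finset.mem_insert, Finset.mem_singleton]
  constructor
  · rintro ⟨hxA, hx | hx⟩
    · exact absurd (hx ▸ hxA) hi
    · exact hx
  · rintro rfl
    exact ⟨hj, Or.inr rfl⟩

lemma mv_eq : A.erase j ∪ {i} = insert i (A.erase j) := by
  rw [Finset.union_comm, ← Finset.insert_eq]

lemma mv_card (hj : j ∈ A) (hi : i ∉ A) : (A.erase j ∪ {i}).card = A.card := by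
  rw [mv_eq, Finset.card_insert_of_notMem (fun h => hi (Finset.mem_of_mem_erase h)),
    Finset.card_erase_add_one hj]

lemma shiftSet_card (hij : i ≠ j) : (shiftSet i j G A).card = A.card := by
  rw [shiftSet]
  split_ifs with h
  · exact mv_card (cond_mem hij h.1).1 (cond_mem hij h.1).2
  · rfl

lemma shiftSet_subset (hi1 : 1 ≤ i) (hin : i ≤ n) (hA : A ⊆ Icc 1 n) :
    shiftSet i j G A ⊆ Icc 1 n := by
  rw [shiftSet]
  split_ifs with h
  · intro x hx
    rw [mv_eq, Finset.mem_insert] at hx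
    rcases hx with rfl | hx
    · rw [Finset.mem_Icc]; exact ⟨hi1, hin⟩
    · exact hA (Finset.mem_of_mem_erase hx)
  · exact hA

lemma shiftSet_injOn (hij : i ≠ j) :
    ∀ A ∈ G, ∀ B ∈ G, shiftSet i j G A = shiftSet i j G B → A = B := by
  intro A hA B hB h
  rw [shiftSet, shiftSet] at h
  split_ifs at h with h1 h2 h2
  · -- both moved
    obtain ⟨hjA, hiA⟩ := cond_mem hij h1.1
    obtain ⟨hjB, hiB⟩ := cond_mem hij h2.1
    rw [mv_eq, mv_eq] at h
    have he : A.erase j = B.erase j := by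
      have hiA' : i ∉ A.erase j := fun hh => hiA (Finset.mem_of_mem_erase hh)
      have hiB' : i ∉ B.erase j := fun hh => hiB (Finset.mem_of_mem_erase hh)
      rw [← Finset.erase_insert hiA', h, Finset.erase_insert hiB']
    rw [← Finset.insert_erase hjA, he, Finset.insert_erase hjB]
  · exact absurd (h ▸ hB) h1.2
  · exact absurd (h ▸ hA) h2.2
  · exact h

lemma shiftSet_ne_iff (hij : i ≠ j) :
    shiftSet i j G A ≠ A ↔ (A ∩ {i, j} = {j} ∧ (A.erase j ∪ {i}) ∉ G) := by
  rw [shiftSet]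
  split_ifs with h
  · simp only [iff_true_intro h, iff_true]
    obtain ⟨hjA, hiA⟩ := cond_mem hij h.1
    intro heq
    apply hiA
    rw [← heq, mv_eq]
    exact Finset.mem_insert_self i _
  · exact iff_of_false (fun h' => h' rfl) h

lemma shift_card_eq (hij : i ≠ j) : (shift i j G).card = G.card := by
  rw [shift]
  exact Finset.card_image_of_injOn (fun A hA B hB => shiftSet_injOn hij A hA B hB)

lemma shift_mu (p : ℝ) (n : ℕ) (hij : i ≠ j) : mu p n (shift i j G) = mu p n G := by
  rw [mu, mu, shift, Finset.sum_image (shiftSet_injOn hij)]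
  apply Finset.sum_congr rfl
  intro A _
  rw [shiftSet_card hij]

lemma shift_subset (n : ℕ) (hi1 : 1 ≤ i) (hin : i ≤ n) (hsub : ∀ A ∈ G, A ⊆ Icc 1 n) :
    ∀ A ∈ shift i j G, A ⊆ Icc 1 n := by
  intro A hA
  rw [shift, Finset.mem_image] at hA
  obtain ⟨B, hB, rfl⟩ := hA
  exact shiftSet_subset hi1 hin (hsub B hB)

lemma shift_sum_lt (hij : i < j) (hne : shift i j G ≠ G) :
    (∑ A ∈ shift i j G, ∑ x ∈ A, x) < ∑ A ∈ G, ∑ x ∈ A, x := by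
  have hij' : i ≠ j := Nat.ne_of_lt hij
  rw [shift, Finset.sum_image (shiftSet_injOn hij')]
  have hex : ∃ A ∈ G, shiftSet i j G A ≠ A := by
    by_contra hc
    push_neg at hc
    apply hne
    rw [shift]
    have : G.image (shiftSet i j G) = G.image id := Finset.image_congr (fun A hA => hc A hA)
    rwa [Finset.image_id] at this
  obtain ⟨A₀, hA₀, hA₀ne⟩ := hex
  apply Finset.sum_lt_sum
  · intro A hA
    rw [shiftSet]
    split_ifs with h
    · obtain ⟨hjA, hiA⟩ := cond_mem hij' h.1
      rw [mv_eq, Finset.sum_insert (fun hh => hiA (Finset.mem_of_mem_erase hh))]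
      have := Finset.sum_erase_add A id hjA
      simp only [id] at this
      omega
    · exact le_rfl
  · refine ⟨A₀, hA₀, ?_⟩
    have h := (shiftSet_ne_iff hij').1 hA₀ne
    rw [shiftSet, if_pos h]
    obtain ⟨hjA, hiA⟩ := cond_mem hij' h.1
    rw [mv_eq, Finset.sum_insert (fun hh => hiA (Finset.mem_of_mem_erase hh))]
    have := Finset.sum_erase_add A₀ id hjA
    simp only [id] at this
    omega

-- the key intersection preservation, asymmetric case
lemma shift_inter_asym {s : ℕ} (hij : i ≠ j)
    (hpair : ∀ A ∈ G, ∀ B ∈ G, s ≤ (A ∩ B).card)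
    (hA : A ∈ G) (hB : B ∈ G)
    (hcA : A ∩ {i, j} = {j} ∧ (A.erase j ∪ {i}) ∉ G)
    (hcB : ¬(B ∩ {i, j} = {j} ∧ (B.erase j ∪ {i}) ∉ G)) :
    s ≤ ((A.erase j ∪ {i}) ∩ B).card := by
  obtain ⟨hjA, hiA⟩ := cond_mem hij hcA.1
  by_cases hjB : j ∈ B
  · by_cases hiB : i ∈ B
    · -- replace within intersection
      have hsub : insert i ((A ∩ B).erase j) ⊆ (A.erase j ∪ {i}) ∩ B := by
        intro x hx
        rw [Finset.mem_insert] at hx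
        rw [Finset.mem_inter, mv_eq, Finset.mem_insert]
        rcases hx with rfl | hx
        · exact ⟨Or.inl rfl, hiB⟩
        · rw [Finset.mem_erase, Finset.mem_inter] at hx
          exact ⟨Or.inr (Finset.mem_erase.2 ⟨hx.1, hx.2.1⟩), hx.2.2⟩
      have hcard : (insert i ((A ∩ B).erase j)).card = (A ∩ B).card := by
        rw [Finset.card_insert_of_notMem (fun hh =>
          hiA (Finset.mem_inter.1 (Finset.mem_of_mem_erase hh)).1),
          Finset.card_erase_add_one (Finset.mem_inter.2 ⟨hjA, hjB⟩)]
      calc s ≤ (A ∩ B).card := hpair A hA B hB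
        _ = (insert i ((A ∩ B).erase j)).card := hcard.symm
        _ ≤ _ := Finset.card_le_card hsub
    · -- B could have been shifted, so its shift is in G
      have hBc : B ∩ {i, j} = {j} := cond_of_mem hij hjB hiB
      have hBm : (B.erase j ∪ {i}) ∈ G := by
        by_contra hc
        exact hcB ⟨hBc, hc⟩
      have hp := hpair A hA _ hBm
      have hsub : A ∩ (B.erase j ∪ {i}) ⊆ (A.erase j ∪ {i}) ∩ B := by
        intro x hx
        rw [Finset.mem_inter, mv_eq, Finset.mem_insert] at hx
        obtain ⟨hxA, hx2⟩ := hx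
        rcases hx2 with rfl | hx2
        · exact absurd hxA hiA
        · rw [Finset.mem_erase] at hx2
          rw [Finset.mem_inter, mv_eq, Finset.mem_insert]
          exact ⟨Or.inr (Finset.mem_erase.2 ⟨hx2.1, hxA⟩), hx2.2⟩
      exact le_trans hp (Finset.card_le_card hsub)
  · -- j ∉ B
    have hsub : A ∩ B ⊆ (A.erase j ∪ {i}) ∩ B := by
      intro x hx
      rw [Finset.mem_inter] at hx
      rw [Finset.mem_inter, mv_eq, Finset.mem_insert]
      have : x ≠ j := fun h => hjB (h ▸ hx.2)
      exact ⟨Or.inr (Finset.mem_erase.2 ⟨this, hx.1⟩), hx.2⟩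
    exact le_trans (hpair A hA B hB) (Finset.card_le_card hsub)

lemma shift_pairwise {s : ℕ} (hij : i ≠ j)
    (hpair : ∀ A ∈ G, ∀ B ∈ G, s ≤ (A ∩ B).card) :
    ∀ A ∈ shift i j G, ∀ B ∈ shift i j G, s ≤ (A ∩ B).card := by
  intro A' hA' B' hB'
  rw [shift, Finset.mem_image] at hA' hB'
  obtain ⟨A, hA, rfl⟩ := hA'
  obtain ⟨B, hB, rfl⟩ := hB'
  rw [shiftSet, shiftSet]
  split_ifs with h1 h2 h2
  · -- both moved
    obtain ⟨hjA, hiA⟩ := cond_mem hij h1.1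
    obtain ⟨hjB, hiB⟩ := cond_mem hij h2.1
    have hsub : insert i ((A ∩ B).erase j) ⊆ (A.erase j ∪ {i}) ∩ (B.erase j ∪ {i}) := by
      intro x hx
      rw [Finset.mem_insert] at hx
      rw [Finset.mem_inter, mv_eq, mv_eq, Finset.mem_insert, Finset.mem_insert]
      rcases hx with rfl | hx
      · exact ⟨Or.inl rfl, Or.inl rfl⟩
      · rw [Finset.mem_erase, Finset.mem_inter] at hx
        exact ⟨Or.inr (Finset.mem_erase.2 ⟨hx.1, hx.2.1⟩),
          Or.inr (Finset.mem_erase.2 ⟨hx.1, hx.2.2⟩)⟩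
    have hcard : (insert i ((A ∩ B).erase j)).card = (A ∩ B).card := by
      rw [Finset.card_insert_of_notMem (fun hh =>
        hiA (Finset.mem_inter.1 (Finset.mem_of_mem_erase hh)).1),
        Finset.card_erase_add_one (Finset.mem_inter.2 ⟨hjA, hjB⟩)]
    calc s ≤ (A ∩ B).card := hpair A hA B hB
      _ = (insert i ((A ∩ B).erase j)).card := hcard.symm
      _ ≤ _ := Finset.card_le_card hsub
  · exact shift_inter_asym hij hpair hA hB h1 h2
  · rw [Finset.inter_comm]
    exact shift_inter_asym hij hpair hB hA h2 h1
  · exact hpair A hA B hB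

end ShiftLemmas

lemma mu_eq_muOn (p : ℝ) (n : ℕ) (G : Finset (Finset ℕ)) :
    mu p n G = muOn p (Icc 1 n) G := by
  rw [mu, muOn, Nat.card_Icc]
  simp

lemma master {p : ℝ} (hp : 0 < p) (hp1 : p < 1) (n s : ℕ) (hs : 1 ≤ s) :
    ∀ (N : ℕ) (G : Finset (Finset ℕ)), (∑ A ∈ G, ∑ x ∈ A, x) ≤ N →
    (∀ A ∈ G, A ⊆ Icc 1 n) → (∀ A ∈ G, ∀ B ∈ G, s ≤ (A ∩ B).card) →
    mu p n G ≤ (p/(1-p))^s := by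
  intro N
  induction N using Nat.strong_induction_on with
  | _ N IH =>
    intro G hW hsub hpair
    by_cases hex : ∃ i j : ℕ, 1 ≤ i ∧ i < j ∧ j ≤ n ∧ shift i j G ≠ G
    · obtain ⟨i, j, hi1, hij, hjn, hne⟩ := hex
      have hlt := shift_sum_lt hij hne
      have hij' : i ≠ j := Nat.ne_of_lt hij
      have h1 := IH (∑ A ∈ shift i j G, ∑ x ∈ A, x) (by omega) (shift i j G) le_rfl
        (shift_subset n hi1 (le_of_lt (lt_of_lt_of_le hij hjn)) hsub)
        (shift_pairwise hij' hpair)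
      rwa [shift_mu p n hij'] at h1
    · push_neg at hex
      have hshifted : ∀ i j : ℕ, 1 ≤ i → i < j → j ≤ n → shift i j G = G := hex
      have hclo : ∀ F ∈ G, ∀ i j : ℕ, 1 ≤ i → i < j → j ≤ n → j ∈ F → i ∉ F →
          (F.erase j ∪ {i}) ∈ G := by
        intro F hF i j hi1 hij hjn hjF hiF
        by_cases hmem : (F.erase j ∪ {i}) ∈ G
        · exact hmem
        · have hcond : F ∩ {i, j} = {j} ∧ (F.erase j ∪ {i}) ∉ G :=
            ⟨cond_of_mem (Nat.ne_of_lt hij) hjF hiF, hmem⟩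
          have : shiftSet i j G F ∈ shift i j G := by
            rw [shift]
            exact Finset.mem_image_of_mem _ hF
          rw [shiftSet, if_pos hcond, hshifted i j hi1 hij hjn] at this
          exact this
      have hreach : ∀ F ∈ G, ∃ m, m + s ≤ 2 * (F ∩ Icc 1 m).card :=
        closure_walk n s hs G hsub hpair hclo
      have hw := walk_bound hp hp1 n 0 s G
        (by simpa using hsub) (by simpa using hreach)
      rw [mu_eq_muOn]
      simpa using hw


lemma log_cubic {x : ℝ} (hx : 0 ≤ x) (hx2 : x ≤ 1/5) :
    Real.log (1+x) ≤ x - x^2/2 + x^3/3 := by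
  have habs : |(-x)| < 1 := by
    rw [abs_neg, abs_of_nonneg hx]; linarith
  have h := Real.abs_log_sub_add_sum_range_le habs 4
  rw [abs_neg, abs_of_nonneg hx] at h
  have hsum : (∑ i ∈ Finset.range 4, (-x) ^ (i + 1) / (i + 1))
      = -x + x^2/2 - x^3/3 + x^4/4 := by
    simp [Finset.sum_range_succ]
    ring
  rw [hsum] at h
  have h1x : (1:ℝ) - -x = 1 + x := by ring
  rw [h1x] at h
  have h2 := (abs_le.1 h).2
  have hx1 : (0:ℝ) < 1 - x := by linarith
  have hfrac : x ^ 5 / (1 - x) ≤ x^4/4 := by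
    rw [div_le_div_iff₀ hx1 (by norm_num)]
    nlinarith [pow_nonneg hx 4]
  linarith

lemma log_lb : (2.6458 : ℝ) ≤ Real.log 14.0964 := by
  have h16 : Real.log (16/14.0964 : ℝ) = Real.log 16 - Real.log 14.0964 :=
    Real.log_div (by norm_num) (by norm_num)
  have h2 : Real.log 16 = 4 * Real.log 2 := by
    rw [show (16:ℝ) = 2^4 by norm_num, Real.log_pow]
    norm_num
  have hx : (16/14.0964 : ℝ) = 1 + 4759/35241 := by norm_num
  have hub : Real.log (16/14.0964 : ℝ) ≤ 4759/35241 - (4759/35241)^2/2 + (4759/35241)^3/3 := by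
    rw [hx]
    exact log_cubic (by norm_num) (by norm_num)
  have hl2 := Real.log_two_gt_d9
  have := h16 ▸ hub
  nlinarith [hl2]

lemma numeric_core {r : ℝ} (hr : 14.0964 ≤ r) (t d : ℕ)
    (htr : (t:ℝ) = r^2 + 3*r) (hd : r/2 - 1/2 - 9/(16*r) ≤ (d:ℝ)) :
    ((r+1)/r)^t * (1/r)^d < 1/2 := by
  have hr0 : 0 < r := by linarith
  have hb1 : (0:ℝ) < (r+1)/r := by positivity
  have hb2 : (0:ℝ) < 1/r := by positivity
  have hLpos : (0:ℝ) < ((r+1)/r)^t * (1/r)^d := by positivity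
  rw [← Real.log_lt_log_iff hLpos (by norm_num : (0:ℝ) < 1/2)]
  rw [Real.log_mul (by positivity) (by positivity), Real.log_pow, Real.log_pow]
  have hloghalf : Real.log (1/2 : ℝ) = - Real.log 2 := by
    rw [one_div, Real.log_inv]
  rw [hloghalf]
  have hloginv : Real.log (1/r) = - Real.log r := by
    rw [one_div, Real.log_inv]
  rw [hloginv]
  -- bound t * log((r+1)/r)
  have hfrac : (r+1)/r = 1 + 1/r := by field_simp
  have hlog1 : Real.log ((r+1)/r) ≤ 1/r - (1/r)^2/2 + (1/r)^3/3 := by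
    rw [hfrac]
    apply log_cubic (by positivity)
    rw [div_le_div_iff₀ hr0 (by norm_num)]
    linarith
  have htb : (t:ℝ) * Real.log ((r+1)/r) ≤ r + 5/2 - 7/(6*r) + 1/r^2 := by
    have h1 : (t:ℝ) * Real.log ((r+1)/r) ≤ (t:ℝ) * (1/r - (1/r)^2/2 + (1/r)^3/3) := by
      apply mul_le_mul_of_nonneg_left hlog1 (by positivity)
    have h2 : (r^2 + 3*r) * (1/r - (1/r)^2/2 + (1/r)^3/3) = r + 5/2 - 7/(6*r) + 1/r^2 := by
      field_simp
      ring
    rw [htr] at h1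
    rw [htr]
    linarith [h1, h2.le, h2.ge]
  -- bound log r from below
  have hlogr : (2.6458:ℝ) ≤ Real.log r := by
    have h1 : Real.log 14.0964 ≤ Real.log r :=
      Real.log_le_log (by norm_num) hr
    linarith [log_lb]
  have hcoef : (0:ℝ) ≤ r/2 - 1/2 - 9/(16*r) := by
    rw [sub_nonneg]
    rw [div_le_iff₀ (by positivity : (0:ℝ) < 16*r)]
    nlinarith
  have hdb : (r/2 - 1/2 - 9/(16*r)) * 2.6458 ≤ (d:ℝ) * Real.log r := by
    apply mul_le_mul hd hlogr (by norm_num) (Nat.cast_nonneg d)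
  have hl2 := Real.log_two_lt_d9
  -- final polynomial inequality
  have hpoly : r + 5/2 - 7/(6*r) + 1/r^2 + 0.6931471808 <
      (r/2 - 1/2 - 9/(16*r)) * 2.6458 := by
    rw [← sub_pos]
    have hr2 : (0:ℝ) < r^2 := by positivity
    have e1 : 7/(6*r) * r = 7/6 := by field_simp <;> ring
    have e2 : 9/(16*r) * r = 9/16 := by field_simp <;> ring
    have e3 : 1/r^2 * r^2 = 1 := by field_simp <;> ring
    nlinarith [mul_pos hr0 hr0, mul_pos (mul_pos hr0 hr0) hr0,
      mul_nonneg (mul_nonneg (sub_nonneg.2 hr) (sub_nonneg.2 hr)) (sub_nonneg.2 hr),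
      mul_nonneg (mul_nonneg (sub_nonneg.2 hr) hr0.le) hr0.le,
      mul_nonneg (sub_nonneg.2 hr) hr0.le]
  nlinarith [htb, hdb, hl2, hpoly]

lemma sqrt_aux {r : ℝ} (hr : 14.0964 ≤ r) : (r + 3/2 - 9/(8*r))^2 ≤ r^2 + 3*r := by
  have hr0 : (0:ℝ) < r := by linarith
  have e : 9/(8*r)*r = 9/8 := by field_simp
  have hu0 : (0:ℝ) < 9/(8*r) := by positivity
  have hu3 : 9/(8*r) ≤ 3 := by
    rw [div_le_iff₀ (by positivity : (0:ℝ) < 8*r)]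
    linarith
  nlinarith [e, hu0, hu3]

theorem stmt_18 (n t : ℕ) (ht : 241 ≤ t) (H : Finset (Finset ℕ))
    (hH : ∀ A ∈ H, A ⊆ Finset.Icc 1 n)
    (hint : RWise 2 (⌈(t : ℝ) + Real.sqrt t / 2 - 5 / 4⌉₊) H)
    (p : ℝ) (hp : 0 < p) (hp0 : p ≤ p0 t) :
    mu p n H < (1 / 2) * p ^ t := by
  set s := ⌈(t : ℝ) + Real.sqrt t / 2 - 5 / 4⌉₊ with hsdef
  -- pairwise intersection property
  have hpair : ∀ A ∈ H, ∀ B ∈ H, s ≤ (A ∩ B).card := by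
    intro A hA B hB
    have h := hint ![A, B] (by
      intro k
      fin_cases k <;> simpa)
    have hiint : (⋂ k, ((![A,B] k : Finset ℕ) : Set ℕ)) = ((A ∩ B : Finset ℕ) : Set ℕ) := by
      ext x
      simp [Set.mem_iInter, Fin.forall_fin_two]
    rw [hiint, Set.ncard_coe_finset] at h
    exact h
  -- basic real facts
  have ht' : (241:ℝ) ≤ (t:ℝ) := by exact_mod_cast ht
  have htpos : (0:ℝ) ≤ (t:ℝ) := by linarith
  have hsqrtt : (15:ℝ) ≤ Real.sqrt t := by
    rw [Real.le_sqrt (by norm_num) htpos]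
    norm_num
    linarith
  have hsceil : (t:ℝ) + Real.sqrt t / 2 - 5/4 ≤ (s:ℝ) := Nat.le_ceil _
  have hts : t + 1 ≤ s := by
    have h1 : (t:ℝ) + 1 ≤ (s:ℝ) := by linarith
    exact_mod_cast h1
  -- the parameter r
  set S := Real.sqrt (4*(t:ℝ)+9) with hSdef
  have hS973 : Real.sqrt 973 ≤ S := Real.sqrt_le_sqrt (by linarith)
  have h973 : (31.1928:ℝ) ≤ Real.sqrt 973 := by
    rw [Real.le_sqrt (by norm_num) (by norm_num)]
    norm_num
  set r := (S - 3)/2 with hrdef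
  have hr : (14.0964:ℝ) ≤ r := by rw [hrdef]; linarith
  have hr0 : (0:ℝ) < r := by linarith
  have hS2 : S^2 = 4*(t:ℝ)+9 := Real.sq_sqrt (by linarith)
  have hSr : S = 2*r + 3 := by rw [hrdef]; ring
  have htr : (t:ℝ) = r^2 + 3*r := by nlinarith [hS2, hSr]
  have hrp1 : (0:ℝ) < r + 1 := by linarith
  have hp0r : p0 t = 1/(r+1) := by
    rw [p0]
    have hden : Real.sqrt (4 * (t:ℕ) + 9) - 1 = 2*(r+1) := by
      push_cast
      rw [← hSdef, hSr]; ring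
    rw [hden]
    rw [eq_div_iff (by positivity)]
    field_simp
  -- p and q facts
  have hpp : p ≤ 1/(r+1) := by rw [hp0r] at hp0; exact hp0
  have hpsmall : p ≤ 1/15 := by
    have : 1/(r+1) ≤ (1:ℝ)/15 := by
      rw [div_le_div_iff₀ hrp1 (by norm_num)]
      linarith
    linarith
  have hq0 : (0:ℝ) < 1 - p := by linarith
  have hp1 : p < 1 := by linarith
  -- master bound
  have hs1 : 1 ≤ s := by omega
  have hmu : mu p n H ≤ (p/(1-p))^s :=
    master hp hp1 n s hs1 (∑ A ∈ H, ∑ x ∈ A, x) H le_rfl hH hpair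
  -- exponent split
  set d := s - t with hddef
  have hsd : s = t + d := by omega
  have hdr : (d:ℝ) = (s:ℝ) - (t:ℝ) := by
    rw [hddef]
    push_cast [Nat.cast_sub (by omega : t ≤ s)]
    ring
  have hsqrt_lb : r + 3/2 - 9/(8*r) ≤ Real.sqrt t := by
    have hu0 : (0:ℝ) < 9/(8*r) := by positivity
    have hu3 : 9/(8*r) ≤ 3 := by
      rw [div_le_iff₀ (by positivity : (0:ℝ) < 8*r)]
      linarith
    have hx : (0:ℝ) < r + 3/2 - 9/(8*r) := by linarith
    rw [Real.le_sqrt' hx, htr]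
    exact sqrt_aux hr
  have hdlb : r/2 - 1/2 - 9/(16*r) ≤ (d:ℝ) := by
    have e916 : 9/(16*r) = (9/(8*r))/2 := by
      rw [div_div]
      congr 1
      ring
    rw [hdr]
    linarith [hsceil, hsqrt_lb]
  -- numeric bound
  have hnum : ((r+1)/r)^t * (1/r)^d < 1/2 := numeric_core hr t d htr hdlb
  -- transfer to p
  have hq_ge : r/(r+1) ≤ 1 - p := by
    have e : 1 - 1/(r+1) = r/(r+1) := by field_simp; ring
    linarith
  have hqq0 : (0:ℝ) < r/(r+1) := by positivity
  have h1q : 1/(1-p) ≤ (r+1)/r := by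
    have h := one_div_le_one_div_of_le hqq0 hq_ge
    rwa [one_div_div] at h
  have hpq : p/(1-p) ≤ 1/r := by
    rw [div_le_div_iff₀ hq0 hr0]
    have h1 : p*r ≤ (1/(r+1))*r := mul_le_mul_of_nonneg_right hpp hr0.le
    have h2 : (1/(r+1))*r = r/(r+1) := by ring
    linarith [hq_ge]
  have hsplit : (p/(1-p))^s = p^t * ((1/(1-p))^t * (p/(1-p))^d) := by
    rw [hsd, pow_add]
    have e : p/(1-p) = p * (1/(1-p)) := by ring
    rw [e, mul_pow]
    ring
  have hfac : (1/(1-p))^t * (p/(1-p))^d ≤ ((r+1)/r)^t * (1/r)^d := by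
    apply mul_le_mul
    · exact pow_le_pow_left₀ (by positivity) h1q t
    · exact pow_le_pow_left₀ (by positivity) hpq d
    · positivity
    · positivity
  have hptpos : (0:ℝ) < p^t := by positivity
  calc mu p n H ≤ (p/(1-p))^s := hmu
    _ = p^t * ((1/(1-p))^t * (p/(1-p))^d) := hsplit
    _ ≤ p^t * (((r+1)/r)^t * (1/r)^d) := by
        apply mul_le_mul_of_nonneg_left hfac hptpos.le
    _ < p^t * (1/2) := by
        apply mul_lt_mul_of_pos_left hnum hptpos
    _ = (1/2) * p^t := by ring
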